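/- Let p, q > 0 and let t be a real number with |t| < π/2. Then ∫_0^∞ x^{p−1} e^{−q x} cos(q x tan t) dx = (Γ(p)/q^p) cos^p(t) cos(p t), where Γ is Euler's gamma function. -/

import Mathlib

open Real MeasureTheory

open Complex Filter Set

noncomputable def Fc (p : ℝ) (z : ℂ) : ℂ :=
  ∫ x in Set.Ioi (0 : ℝ), (x : ℂ) ^ ((p : ℂ) - 1) * Complex.exp (-z * x)

lemma int_real (p : ℝ) (hp : 0 < p) {c : ℝ} (hc : 0 < c) {s : ℝ} (hs : -1 < s) :
    IntegrableOn (fun x : ℝ => x ^ s * Real.exp (-c * x)) (Set.Ioi 0) := by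
  simpa [Real.rpow_one] using
    integrableOn_rpow_mul_exp_neg_mul_rpow (s := s) (p := 1) hs one_pos hc

lemma meas_aux (p : ℝ) (z : ℂ) :
    AEStronglyMeasurable (fun x : ℝ => (x : ℂ) ^ ((p : ℂ) - 1) * Complex.exp (-z * x))
      (volume.restrict (Set.Ioi 0)) := by
  apply ContinuousOn.aestronglyMeasurable _ measurableSet_Ioi
  apply ContinuousOn.mul
  · intro x hx
    exact (Complex.continuousAt_ofReal_cpow_const x _ (Or.inr (ne_of_gt hx))).continuousWithinAt
  · exact (Complex.continuous_exp.comp (by continuity)).continuousOn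

lemma intC (p : ℝ) (hp : 0 < p) {z : ℂ} (hz : 0 < z.re) :
    IntegrableOn (fun x : ℝ => (x : ℂ) ^ ((p : ℂ) - 1) * Complex.exp (-z * x)) (Set.Ioi 0) := by
  refine ((int_real p hp (c := z.re) hz (s := p - 1) (by linarith)).mono' (meas_aux p z) ?_)
  rw [ae_restrict_iff' measurableSet_Ioi]
  filter_upwards with x hx
  rw [norm_mul, Complex.norm_cpow_eq_rpow_re_of_pos hx, Complex.norm_exp]
  simp [neg_mul]

lemma Fc_hasDeriv (p : ℝ) (hp : 0 < p) {z₀ : ℂ} (hz : 0 < z₀.re) :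
    DifferentiableAt ℂ (Fc p) z₀ := by
  set ε := z₀.re / 2 with hε
  have hεpos : 0 < ε := by positivity
  have key := hasDerivAt_integral_of_dominated_loc_of_deriv_le (μ := volume.restrict (Set.Ioi 0))
    (F := fun z x => (x : ℂ) ^ ((p : ℂ) - 1) * Complex.exp (-z * x))
    (F' := fun z x => (x : ℂ) ^ ((p : ℂ) - 1) * (-(x : ℂ) * Complex.exp (-z * x)))
    (x₀ := z₀) (bound := fun x => x ^ p * Real.exp (-ε * x)) (Metric.ball_mem_nhds z₀ hεpos)
    (Filter.Eventually.of_forall fun z => meas_aux p z) ((intC p hp hz))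
    ?_ ?_ ?_ ?_
  · exact key.2.differentiableAt
  · -- measurability of F' z₀
    apply ContinuousOn.aestronglyMeasurable _ measurableSet_Ioi
    apply ContinuousOn.mul
    · intro x hx
      exact (Complex.continuousAt_ofReal_cpow_const x _ (Or.inr (ne_of_gt hx))).continuousWithinAt
    · exact (continuous_ofReal.neg.mul (Complex.continuous_exp.comp (by continuity))).continuousOn
  · -- bound
    rw [ae_restrict_iff' measurableSet_Ioi]
    filter_upwards with x hx z hzb
    have hzre : ε ≤ z.re := by
      have := Complex.abs_re_le_norm (z - z₀)
      have h2 : ‖z - z₀‖ < ε := by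
        simpa [Complex.dist_eq] using Metric.mem_ball.mp hzb
      have : |z.re - z₀.re| < ε := by
        calc |z.re - z₀.re| = |(z - z₀).re| := by simp
        _ ≤ ‖z - z₀‖ := Complex.abs_re_le_norm _
        _ < ε := h2
      have := abs_lt.mp this
      linarith [this.1]
    rw [norm_mul, norm_mul,
      Complex.norm_cpow_eq_rpow_re_of_pos hx, Complex.norm_exp, norm_neg, Complex.norm_real,
      Real.norm_eq_abs, abs_of_pos hx]
    have : x ^ (((p:ℂ)-1).re) * (x * Real.exp ((-z * x).re)) = x ^ p * Real.exp (-z.re * x) := by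
      simp only [Complex.sub_re, Complex.ofReal_re, Complex.one_re, Complex.neg_re,
        Complex.mul_re, Complex.ofReal_im, mul_zero, sub_zero]
      rw [← mul_assoc, ← Real.rpow_add_one (ne_of_gt hx)]
      ring_nf
    rw [this]
    have hx0 : (0:ℝ) < x := hx
    exact mul_le_mul_of_nonneg_left (Real.exp_le_exp.mpr (by nlinarith)) (by positivity)
  · exact (int_real p hp (c := ε) hεpos (s := p) (by linarith)).mono'
      (by
        apply ContinuousOn.aestronglyMeasurable _ measurableSet_Ioi
        exact (continuousOn_id.rpow_const (fun x hx => Or.inl (ne_of_gt hx))).mul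
          (Real.continuous_exp.comp (by continuity)).continuousOn)
      (by
        rw [ae_restrict_iff' measurableSet_Ioi]
        filter_upwards with x hx
        have hx0 : (0:ℝ) < x := hx
        exact le_of_eq (abs_of_nonneg (by positivity)))
  · -- hasDerivAt
    rw [ae_restrict_iff' measurableSet_Ioi]
    filter_upwards with x hx z hzb
    have h1 : HasDerivAt (fun z : ℂ => -z * (x : ℂ)) (-(x : ℂ)) z := by
      simpa using ((hasDerivAt_id z).neg.mul_const (x : ℂ))
    have h2 := h1.cexp
    have h3 := h2.const_mul ((x : ℂ) ^ ((p : ℂ) - 1))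
    convert h3 using 1
    · rfl
    ring

noncomputable def Gc (p : ℝ) (z : ℂ) : ℂ := (1 / z) ^ (p : ℂ) * Complex.Gamma p

lemma FG_eq (p : ℝ) (hp : 0 < p) {z : ℂ} (hz : 0 < z.re) : Fc p z = Gc p z := by
  have hU : IsOpen {z : ℂ | 0 < z.re} := isOpen_lt continuous_const Complex.continuous_re
  have hpre : IsPreconnected {z : ℂ | 0 < z.re} :=
    (convex_halfSpace_re_gt 0).isPreconnected
  have hF : AnalyticOnNhd ℂ (Fc p) {z : ℂ | 0 < z.re} := by
    apply DifferentiableOn.analyticOnNhd _ hU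
    exact fun z hz => (Fc_hasDeriv p hp hz).differentiableWithinAt
  have hG : AnalyticOnNhd ℂ (Gc p) {z : ℂ | 0 < z.re} := by
    apply DifferentiableOn.analyticOnNhd _ hU
    intro z hz
    apply DifferentiableAt.differentiableWithinAt
    apply DifferentiableAt.mul_const
    apply DifferentiableAt.cpow _ (differentiableAt_const _)
    · rw [one_div, Complex.mem_slitPlane_iff, Complex.inv_re]
      left
      exact div_pos hz (Complex.normSq_pos.mpr (by intro h; rw [h] at hz; simp at hz))
    · exact (differentiableAt_const _).div differentiableAt_id (by
        intro h; rw [h] at hz; simp at hz)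
  have hreal : ∀ r : ℝ, 0 < r → Fc p r = Gc p r := by
    intro r hr
    have := Complex.integral_cpow_mul_exp_neg_mul_Ioi (a := (p : ℂ)) (by simpa using hp) hr
    unfold Fc Gc
    simp_rw [neg_mul]
    rw [← this]
  have hfreq : ∃ᶠ w in nhdsWithin (1 : ℂ) {(1 : ℂ)}ᶜ, Fc p w = Gc p w := by
    have htend : Filter.Tendsto (fun x : ℝ => (x : ℂ)) (nhdsWithin (1 : ℝ) (Set.Ioi 1))
        (nhdsWithin (1 : ℂ) {(1 : ℂ)}ᶜ) := by
      apply tendsto_nhdsWithin_of_tendsto_nhds_of_eventually_within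
      · exact (Complex.continuous_ofReal.tendsto 1).mono_left nhdsWithin_le_nhds
      · filter_upwards [self_mem_nhdsWithin] with x hx
        simp only [Set.mem_compl_iff, Set.mem_singleton_iff]
        exact_mod_cast ne_of_gt hx
    apply htend.frequently
    apply Filter.Eventually.frequently
    filter_upwards [self_mem_nhdsWithin] with x hx
    exact hreal x (lt_trans one_pos hx)
  exact hF.eqOn_of_preconnected_of_frequently_eq hG hpre (by simp : (1:ℂ) ∈ _) hfreq hz

/-- For `p, q > 0` and `|t| < π/2`:
`∫_0^∞ x^{p-1} e^{-q x} cos(q x tan t) dx = (Γ(p)/q^p) cos^p(t) cos(p t)`. -/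
theorem integral_rpow_exp_cos (p q t : ℝ) (hp : 0 < p) (hq : 0 < q)
    (ht : |t| < π / 2) :
    ∫ x in Set.Ioi (0 : ℝ), x ^ (p - 1) * Real.exp (-q * x) * Real.cos (q * x * Real.tan t) =
      Real.Gamma p / q ^ p * Real.cos t ^ p * Real.cos (p * t) := by
  have habs := abs_lt.mp ht
  have hcos : 0 < Real.cos t := Real.cos_pos_of_mem_Ioo ⟨by linarith, habs.2⟩
  set z₀ : ℂ := (q : ℂ) * (1 + Real.tan t * Complex.I) with hz₀
  have hzre : 0 < z₀.re := by simpa [hz₀] using hq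
  have hFG := FG_eq p hp hzre
  -- LHS equals real part of Fc p z₀
  have hL : (Fc p z₀).re =
      ∫ x in Set.Ioi (0:ℝ), x ^ (p - 1) * Real.exp (-q * x) * Real.cos (q * x * Real.tan t) := by
    unfold Fc
    have hir := integral_re (μ := volume.restrict (Set.Ioi 0)) (intC p hp hzre)
    simp only [RCLike.re_to_complex] at hir
    rw [← hir]
    refine setIntegral_congr_fun measurableSet_Ioi fun x hx => ?_
    have hc : ((p : ℂ) - 1) = ((p - 1 : ℝ) : ℂ) := by push_cast; ring
    rw [hc, ← Complex.ofReal_cpow hx.le]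
    have h1 : (-z₀ * x).re = -(q * x) := by
      simp only [hz₀, neg_mul, Complex.neg_re, Complex.mul_re, Complex.ofReal_re,
        Complex.ofReal_im, Complex.add_re, Complex.one_re, Complex.add_im, Complex.one_im,
        Complex.mul_im, Complex.I_re, Complex.I_im]
      ring
    have h2 : (-z₀ * x).im = -(q * x * Real.tan t) := by
      simp only [hz₀, neg_mul, Complex.neg_im, Complex.mul_re, Complex.mul_im, Complex.ofReal_re,
        Complex.ofReal_im, Complex.add_re, Complex.one_re, Complex.add_im, Complex.one_im,
        Complex.I_re, Complex.I_im]
      ring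
    rw [Complex.re_ofReal_mul, Complex.exp_re, h1, h2, Real.cos_neg, neg_mul q x]
    ring
  set u : ℂ := ↑(Real.log (Real.cos t / q)) + ↑(-t) * Complex.I with hu
  have hexp : Complex.exp u = ↑(Real.cos t / q) * (↑(Real.cos t) - ↑(Real.sin t) * Complex.I) := by
    rw [hu, Complex.exp_add, ← Complex.ofReal_exp, Real.exp_log (by positivity),
      Complex.exp_mul_I, ← Complex.ofReal_cos, ← Complex.ofReal_sin, Real.cos_neg, Real.sin_neg]
    push_cast
    ring
  have hmul : z₀ * Complex.exp u = 1 := by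
    rw [hexp, hz₀]
    have hS : (Real.tan t : ℂ) * ↑(Real.cos t) = ↑(Real.sin t) := by
      exact_mod_cast congrArg Complex.ofReal (Real.tan_mul_cos hcos.ne')
    have hD : (↑(Real.cos t / q) : ℂ) * ↑q = ↑(Real.cos t) := by
      exact_mod_cast congrArg Complex.ofReal (div_mul_cancel₀ (Real.cos t) hq.ne')
    have h1 : (Real.sin t:ℂ)^2 + (Real.cos t:ℂ)^2 = 1 := by
      exact_mod_cast Real.sin_sq_add_cos_sq t
    linear_combination (↑(Real.cos t) - ↑(Real.sin t)*Complex.I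
        + ↑(Real.tan t)*↑(Real.cos t)*Complex.I
        - ↑(Real.tan t)*↑(Real.sin t)*Complex.I^2) * hD
      + (↑(Real.cos t)*Complex.I - ↑(Real.sin t)*Complex.I^2) * hS + h1
      - (↑(Real.sin t):ℂ)^2 * Complex.I_sq
  have hinv : (1 : ℂ) / z₀ = Complex.exp u := (eq_one_div_of_mul_eq_one_left (by
    rw [mul_comm]; exact hmul)).symm
  have hcpow : (1 / z₀) ^ (p : ℂ) = Complex.exp (u * p) := by
    rw [hinv, Complex.cpow_def_of_ne_zero (Complex.exp_ne_zero u),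
      Complex.log_exp (by simp [hu]; linarith) (by simp [hu]; nlinarith [Real.pi_pos])]
  have hup : u * (p : ℂ) = ↑(Real.log (Real.cos t / q) * p) + ↑(-(t * p)) * Complex.I := by
    rw [hu]; push_cast; ring
  have hexp2 : Complex.exp (u * p) =
      ↑(Real.exp (Real.log (Real.cos t / q) * p)) * (↑(Real.cos (t * p)) - ↑(Real.sin (t * p)) * Complex.I) := by
    rw [hup, Complex.exp_add, ← Complex.ofReal_exp, Complex.exp_mul_I, ← Complex.ofReal_cos,
      ← Complex.ofReal_sin, Real.cos_neg, Real.sin_neg]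
    push_cast
    ring
  have hGval : Gc p z₀ =
      ↑(Real.exp (Real.log (Real.cos t / q) * p) * Real.cos (t * p) * Real.Gamma p)
      - ↑(Real.exp (Real.log (Real.cos t / q) * p) * Real.sin (t * p) * Real.Gamma p)
          * Complex.I := by
    unfold Gc
    rw [hcpow, hexp2, Complex.Gamma_ofReal]
    push_cast
    ring
  have hRe : (Gc p z₀).re = Real.exp (Real.log (Real.cos t / q) * p) * Real.cos (t * p) * Real.Gamma p := by
    rw [hGval]
    simp only [Complex.sub_re, Complex.mul_re, Complex.ofReal_re, Complex.ofReal_im,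
      Complex.I_re, Complex.I_im, mul_zero, zero_mul, mul_one, sub_zero, zero_sub, neg_zero]
  rw [← hL, hFG, hRe, ← Real.rpow_def_of_pos (by positivity : (0:ℝ) < Real.cos t / q),
    Real.div_rpow hcos.le hq.le]
  rw [mul_comm t p]
  ring
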